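/- Let Γ be residually finite with Γ_i ⊴ Γ of finite index and ⋂_{n} ⋃_{i≥n} Γ_i = {e}, and f ∈ ℤΓ invertible in ℓ¹(Γ). Then for every x ∈ X_f there exist y_i ∈ Fix(Γ_i, X_f) with lim_i y_i = x; in particular, the union of the sets of Γ_i-periodic points is dense in X_f. -/

import Mathlib

open scoped BigOperators

/-- Convolution `(g·h)(γ) = ∑ β, g β * h (β⁻¹ γ)` of real functions. -/
noncomputable def convR {Γ : Type*} [Group Γ] (g h : Γ → ℝ) : Γ → ℝ :=
  fun γ => ∑' β : Γ, g β * h (β⁻¹ * γ)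

/-- Indicator of the identity. -/
def deltaE (Γ : Type*) [Group Γ] [DecidableEq Γ] : Γ → ℝ :=
  fun γ => if γ = 1 then 1 else 0

/-- The adjoint `f*` of `f ∈ ℤΓ`: `f*(γ) = f(γ⁻¹)`. -/
def fstar {Γ : Type*} [Group Γ] (f : Γ →₀ ℤ) : Γ →₀ ℤ :=
  Finsupp.equivMapDomain (Equiv.inv Γ) f

/-- Convolution of a `𝕋`-valued function with `g ∈ ℤΓ`:
`(x·g)(γ) = ∑ β, g(β) • x(γ β⁻¹)`. -/
noncomputable def convT {Γ : Type*} [Group Γ] (x : Γ → AddCircle (1 : ℝ))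
    (g : Γ →₀ ℤ) : Γ → AddCircle (1 : ℝ) :=
  fun γ => ∑ β ∈ g.support, g β • x (γ * β⁻¹)

open Filter

section Aux

variable {Γ : Type*} [Group Γ] [DecidableEq Γ]

private lemma summable_norm_shift {G : Γ → ℝ} (hG : Summable fun γ => ‖G γ‖) (γ : Γ) :
    Summable fun β : Γ => ‖G (β⁻¹ * γ)‖ := by
  have := ((Equiv.inv Γ).trans (Equiv.mulRight γ)).summable_iff (f := fun b => ‖G b‖)
  simpa [Function.comp_def] using this.mpr hG

private lemma summable_conv {G : Γ → ℝ} (hG : Summable fun γ => ‖G γ‖) {w : Γ → ℝ} {C : ℝ}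
    (hw : ∀ β, |w β| ≤ C) (γ : Γ) : Summable fun β => w β * G (β⁻¹ * γ) := by
  apply Summable.of_norm_bounded (g := fun β => C * ‖G (β⁻¹ * γ)‖)
    ((summable_norm_shift hG γ).mul_left C)
  intro β
  rw [norm_mul, Real.norm_eq_abs]
  exact mul_le_mul_of_nonneg_right (hw β) (norm_nonneg _)

private lemma tsum_mul_deltaE (w : Γ → ℝ) (γ : Γ) :
    ∑' β : Γ, w β * deltaE Γ (β⁻¹ * γ) = w γ := by
  rw [tsum_eq_single γ]
  · simp [deltaE]
  · intro β hβ
    have : β⁻¹ * γ ≠ 1 := by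
      rw [Ne, inv_mul_eq_one]; exact hβ
    simp [deltaE, this]

private lemma conv_w_T_xi {T : Γ →₀ ℤ} {G : Γ → ℝ} (hG : Summable fun γ => ‖G γ‖)
    (hA : ∀ u : Γ, (∑ α ∈ T.support, (T α : ℝ) * G (α⁻¹ * u)) = deltaE Γ u)
    {w : Γ → ℝ} {C : ℝ} (hw : ∀ β, |w β| ≤ C) (γ : Γ) :
    ∑' β : Γ, (∑ α ∈ T.support, (T α : ℝ) * w (β * α⁻¹)) * G (β⁻¹ * γ) = w γ := by
  have hGα : ∀ α : Γ, Summable fun v : Γ => ‖G (α⁻¹ * v)‖ := by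
    intro α
    have := (Equiv.mulLeft α⁻¹).summable_iff (f := fun v => ‖G v‖)
    simpa [Function.comp_def] using this.mpr hG
  calc ∑' β : Γ, (∑ α ∈ T.support, (T α : ℝ) * w (β * α⁻¹)) * G (β⁻¹ * γ)
      = ∑' β : Γ, ∑ α ∈ T.support, (T α : ℝ) * (w (β * α⁻¹) * G (β⁻¹ * γ)) := by
        refine tsum_congr fun β => ?_
        rw [Finset.sum_mul]
        exact Finset.sum_congr rfl fun α _ => by ring
    _ = ∑ α ∈ T.support, ∑' β : Γ, (T α : ℝ) * (w (β * α⁻¹) * G (β⁻¹ * γ)) := by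
        refine Summable.tsum_finsetSum fun α _ => ?_
        exact (summable_conv hG (w := fun β => w (β * α⁻¹)) (fun β => hw _) γ).mul_left _
    _ = ∑ α ∈ T.support, ∑' δ : Γ, (T α : ℝ) * (w δ * G (α⁻¹ * (δ⁻¹ * γ))) := by
        refine Finset.sum_congr rfl fun α _ => ?_
        rw [← Equiv.tsum_eq (Equiv.mulRight α)
          (fun β => (T α : ℝ) * (w (β * α⁻¹) * G (β⁻¹ * γ)))]
        exact tsum_congr fun δ => by
          simp [Equiv.coe_mulRight, mul_inv_rev, mul_assoc]
    _ = ∑' δ : Γ, ∑ α ∈ T.support, (T α : ℝ) * (w δ * G (α⁻¹ * (δ⁻¹ * γ))) := by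
        refine (Summable.tsum_finsetSum fun α _ => ?_).symm
        exact (summable_conv (hGα α) hw γ).mul_left _
    _ = ∑' δ : Γ, w δ * deltaE Γ (δ⁻¹ * γ) := by
        refine tsum_congr fun δ => ?_
        rw [← hA (δ⁻¹ * γ), Finset.mul_sum]
        exact Finset.sum_congr rfl fun α _ => by ring
    _ = w γ := tsum_mul_deltaE w γ

private lemma T_conv_xi {T : Γ →₀ ℤ} {G : Γ → ℝ} (hG : Summable fun γ => ‖G γ‖)
    (hB : ∀ u : Γ, (∑ α ∈ T.support, (T α : ℝ) * G (u * α⁻¹)) = deltaE Γ u)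
    {w : Γ → ℝ} {C : ℝ} (hw : ∀ β, |w β| ≤ C) (γ : Γ) :
    ∑ α ∈ T.support, (T α : ℝ) * ∑' β : Γ, w β * G (β⁻¹ * (γ * α⁻¹)) = w γ := by
  calc ∑ α ∈ T.support, (T α : ℝ) * ∑' β : Γ, w β * G (β⁻¹ * (γ * α⁻¹))
      = ∑ α ∈ T.support, ∑' β : Γ, (T α : ℝ) * (w β * G (β⁻¹ * (γ * α⁻¹))) := by
        exact Finset.sum_congr rfl fun α _ => (tsum_mul_left).symm
    _ = ∑' β : Γ, ∑ α ∈ T.support, (T α : ℝ) * (w β * G (β⁻¹ * (γ * α⁻¹))) := by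
        refine (Summable.tsum_finsetSum fun α _ => ?_).symm
        exact (summable_conv hG hw (γ * α⁻¹)).mul_left _
    _ = ∑' β : Γ, w β * deltaE Γ (β⁻¹ * γ) := by
        refine tsum_congr fun β => ?_
        rw [← hB (β⁻¹ * γ), Finset.mul_sum]
        refine Finset.sum_congr rfl fun α _ => ?_
        have h : β⁻¹ * (γ * α⁻¹) = (β⁻¹ * γ) * α⁻¹ := (mul_assoc _ _ _).symm
        rw [h]; ring
    _ = w γ := tsum_mul_deltaE w γ

private lemma coe_sum (s : Finset Γ) (c : Γ → ℤ) (w : Γ → ℝ) :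
    ((∑ α ∈ s, (c α : ℝ) * w α : ℝ) : AddCircle (1 : ℝ))
      = ∑ α ∈ s, c α • ((w α : ℝ) : AddCircle (1 : ℝ)) := by
  classical
  induction s using Finset.induction_on with
  | empty => simp
  | insert a s h ih =>
      rw [Finset.sum_insert h, Finset.sum_insert h, AddCircle.coe_add, ih,
        ← AddCircle.coe_zsmul, zsmul_eq_mul]

private lemma coe_sum_convT (T : Γ →₀ ℤ) (w : Γ → ℝ) (γ : Γ) :
    ((∑ α ∈ T.support, (T α : ℝ) * w (γ * α⁻¹) : ℝ) : AddCircle (1 : ℝ))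
      = convT (fun δ => ((w δ : ℝ) : AddCircle (1 : ℝ))) T γ := by
  rw [coe_sum]
  rfl

end Aux
/-- With `Γ_i ⊴ Γ` of finite index, `⋂_n ⋃_{i ≥ n} Γ_i = {e}` and `f ∈ ℤΓ`
invertible in `ℓ¹(Γ)`: every `x ∈ X_f` is a limit of points `y_i ∈ Fix(Γ_i, X_f)`;
in particular the union of the sets of `Γ_i`-periodic points is dense in `X_f`. -/
theorem stmt15 {Γ : Type*} [Group Γ] [Countable Γ] [DecidableEq Γ]
    (f : Γ →₀ ℤ) (finv : Γ → ℝ)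
    (hfinv : Summable fun γ => ‖finv γ‖)
    (h1 : convR (fun γ => (f γ : ℝ)) finv = deltaE Γ)
    (h2 : convR finv (fun γ => (f γ : ℝ)) = deltaE Γ)
    (Γi : ℕ → Subgroup Γ) (hΓfi : ∀ i, (Γi i).FiniteIndex)
    (hΓnorm : ∀ i, (Γi i).Normal)
    (hΓlim : (⋂ n, ⋃ i, ⋃ (_ : n ≤ i), ((Γi i : Set Γ))) = {1})
    (Fixn : ℕ → Set (Γ → AddCircle (1 : ℝ)))
    (hFixn : ∀ n, Fixn n = {x | (∀ γ, convT x (fstar f) γ = 0) ∧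
        ∀ g ∈ Γi n, ∀ γ, x (g⁻¹ * γ) = x γ}) :
    (∀ x : Γ → AddCircle (1 : ℝ), (∀ γ, convT x (fstar f) γ = 0) →
      ∃ y : ℕ → (Γ → AddCircle (1 : ℝ)), (∀ i, y i ∈ Fixn i) ∧
        Tendsto y atTop (nhds x)) ∧
    {x : Γ → AddCircle (1 : ℝ) | ∀ γ, convT x (fstar f) γ = 0} ⊆
      closure (⋃ i, Fixn i) := by
  classical
  have main : ∀ x : Γ → AddCircle (1 : ℝ), (∀ γ, convT x (fstar f) γ = 0) →
      ∃ y : ℕ → (Γ → AddCircle (1 : ℝ)), (∀ i, y i ∈ Fixn i) ∧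
        Tendsto y atTop (nhds x) := by
    intro x hx
    set T : Γ →₀ ℤ := fstar f with hTdef
    have hTapp : ∀ γ : Γ, T γ = f γ⁻¹ := by
      intro γ
      simp [hTdef, fstar, Finsupp.equivMapDomain_apply]
    set Gf : Γ → ℝ := fun γ => finv γ⁻¹ with hGfdef
    have hGsum : Summable fun γ : Γ => ‖Gf γ‖ := by
      have := (Equiv.inv Γ).summable_iff (f := fun γ => ‖finv γ‖)
      simpa [hGfdef, Function.comp_def] using this.mpr hfinv
    -- the two "inverse" identities, finite-sum form
    have hA : ∀ u : Γ, (∑ α ∈ T.support, (T α : ℝ) * Gf (α⁻¹ * u)) = deltaE Γ u := by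
      intro u
      have hzero : ∀ α ∉ T.support, (T α : ℝ) * Gf (α⁻¹ * u) = 0 := by
        intro α hα
        rw [Finsupp.notMem_support_iff] at hα
        rw [hα]; simp
      rw [← tsum_eq_sum (L := SummationFilter.unconditional Γ) hzero]
      have h2u := congrFun h2 u⁻¹
      simp only [convR] at h2u
      calc ∑' α : Γ, (T α : ℝ) * Gf (α⁻¹ * u)
          = ∑' β : Γ, finv β * (f (β⁻¹ * u⁻¹) : ℝ) := by
            rw [← Equiv.tsum_eq (Equiv.mulLeft u) (fun α => (T α : ℝ) * Gf (α⁻¹ * u))]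
            refine tsum_congr fun β => ?_
            simp only [Equiv.coe_mulLeft, hTapp, hGfdef, mul_inv_rev, inv_inv]
            rw [inv_mul_cancel_left]
            ring
        _ = deltaE Γ u⁻¹ := h2u
        _ = deltaE Γ u := by simp [deltaE, inv_eq_one]
    have hB : ∀ u : Γ, (∑ α ∈ T.support, (T α : ℝ) * Gf (u * α⁻¹)) = deltaE Γ u := by
      intro u
      have hzero : ∀ α ∉ T.support, (T α : ℝ) * Gf (u * α⁻¹) = 0 := by
        intro α hα
        rw [Finsupp.notMem_support_iff] at hα
        rw [hα]; simp
      rw [← tsum_eq_sum (L := SummationFilter.unconditional Γ) hzero]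
      have h1u := congrFun h1 u⁻¹
      simp only [convR] at h1u
      calc ∑' α : Γ, (T α : ℝ) * Gf (u * α⁻¹)
          = ∑' β : Γ, (f β : ℝ) * finv (β⁻¹ * u⁻¹) := by
            rw [← Equiv.tsum_eq (Equiv.inv Γ) (fun α => (T α : ℝ) * Gf (u * α⁻¹))]
            refine tsum_congr fun β => ?_
            simp only [Equiv.inv_apply, hTapp, hGfdef, mul_inv_rev, inv_inv]
        _ = deltaE Γ u⁻¹ := h1u
        _ = deltaE Γ u := by simp [deltaE, inv_eq_one]
    -- lift x to a bounded real function
    choose u hu using fun γ => QuotientAddGroup.mk_surjective (x γ)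
    set xt : Γ → ℝ := fun γ => Int.fract (u γ) with hxtdef
    have hxtb : ∀ γ, |xt γ| ≤ 1 := by
      intro γ
      rw [abs_of_nonneg (Int.fract_nonneg _)]
      exact (Int.fract_lt_one _).le
    have hxtcoe : ∀ γ, ((xt γ : ℝ) : AddCircle (1 : ℝ)) = x γ := by
      intro γ
      have h0 : (((⌊u γ⌋ : ℤ) : ℝ) : AddCircle (1 : ℝ)) = 0 := by
        rw [AddCircle.coe_eq_zero_iff]
        exact ⟨⌊u γ⌋, by simp⟩
      have : ((xt γ : ℝ) : AddCircle (1 : ℝ))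
          = ((u γ : ℝ) : AddCircle (1 : ℝ)) - (((⌊u γ⌋ : ℤ) : ℝ) : AddCircle (1 : ℝ)) := by
        rw [← AddCircle.coe_sub]
        rfl
      rw [this, h0, sub_zero, hu]
    -- z = x̃ ⋆ f*
    set M : ℝ := ∑ α ∈ T.support, |(T α : ℝ)| with hM
    set z : Γ → ℝ := fun γ => ∑ α ∈ T.support, (T α : ℝ) * xt (γ * α⁻¹) with hz
    have hzb : ∀ γ, |z γ| ≤ M := by
      intro γ
      calc |z γ| ≤ ∑ α ∈ T.support, |(T α : ℝ) * xt (γ * α⁻¹)| :=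
            Finset.abs_sum_le_sum_abs _ _
        _ ≤ M := by
            rw [hM]
            refine Finset.sum_le_sum fun α _ => ?_
            rw [abs_mul]
            calc |(T α : ℝ)| * |xt (γ * α⁻¹)| ≤ |(T α : ℝ)| * 1 :=
                  mul_le_mul_of_nonneg_left (hxtb _) (abs_nonneg _)
              _ = |(T α : ℝ)| := mul_one _
    have hzcast : ∀ γ, ((z γ : ℝ) : AddCircle (1 : ℝ)) = convT x T γ := by
      intro γ
      rw [hz]
      rw [coe_sum_convT T xt γ]
      congr 1
      exact funext hxtcoe
    -- enumeration and coset representatives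
    obtain ⟨e, he⟩ := exists_surjective_nat Γ
    have hlim' : ∀ g : Γ, g ≠ 1 → ∃ n : ℕ, ∀ i, n ≤ i → g ∉ Γi i := by
      intro g hg
      by_contra hcon
      push_neg at hcon
      have hmem : g ∈ (⋂ n, ⋃ i, ⋃ (_ : n ≤ i), ((Γi i : Set Γ))) := by
        refine Set.mem_iInter.mpr fun n => ?_
        obtain ⟨i, hni, hgi⟩ := hcon n
        exact Set.mem_iUnion.mpr ⟨i, Set.mem_iUnion.mpr ⟨hni, hgi⟩⟩
      rw [hΓlim] at hmem
      exact hg hmem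
    have hrepex : ∀ i : ℕ, ∀ c : Γ ⧸ Γi i, ∃ n : ℕ, ((e n : Γ) : Γ ⧸ Γi i) = c := by
      intro i c
      obtain ⟨g, rfl⟩ := QuotientGroup.mk_surjective c
      obtain ⟨n, rfl⟩ := he g
      exact ⟨n, rfl⟩
    set zi : ℕ → Γ → ℝ := fun i γ => z (e (Nat.find (hrepex i (γ : Γ ⧸ Γi i)))) with hzi
    have hzib : ∀ i γ, |zi i γ| ≤ M := fun i γ => hzb _
    have hziinv : ∀ i : ℕ, ∀ g ∈ Γi i, ∀ γ : Γ, zi i (g⁻¹ * γ) = zi i γ := by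
      intro i g hg γ
      have hq : ((g⁻¹ * γ : Γ) : Γ ⧸ Γi i) = (γ : Γ ⧸ Γi i) := by
        rw [QuotientGroup.eq]
        have := (hΓnorm i).conj_mem g hg γ⁻¹
        simpa [mul_inv_rev, mul_assoc] using this
      rw [hzi]
      exact congrArg (fun c : Γ ⧸ Γi i => z (e (Nat.find (hrepex i c)))) hq
    have hzi_lim : ∀ γ : Γ, ∀ᶠ i in atTop, zi i γ = z γ := by
      intro γ
      have hγ : ∃ n, e n = γ := he γ
      set n₀ := Nat.find hγ with hn₀
      have hen₀ : e n₀ = γ := Nat.find_spec hγ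
      have hNm : ∀ m : ℕ, ∃ N : ℕ, ∀ i, N ≤ i → m < n₀ →
          ((e m : Γ) : Γ ⧸ Γi i) ≠ (γ : Γ ⧸ Γi i) := by
        intro m
        by_cases hm : m < n₀
        · have hne : e m ≠ γ := fun h => Nat.find_min hγ hm h
          have h1' : (e m)⁻¹ * γ ≠ 1 := by
            rw [Ne, inv_mul_eq_one]; exact hne
          obtain ⟨N, hN⟩ := hlim' _ h1'
          refine ⟨N, fun i hi _ => ?_⟩
          rw [Ne, QuotientGroup.eq]
          exact fun hmem => hN i hi hmem
        · exact ⟨0, fun i _ hm' => absurd hm' hm⟩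
      choose N hN using hNm
      rw [eventually_atTop]
      refine ⟨(Finset.range n₀).sup N, fun i hi => ?_⟩
      have hfind : Nat.find (hrepex i (γ : Γ ⧸ Γi i)) = n₀ := by
        apply le_antisymm
        · apply Nat.find_le
          rw [hen₀]
        · rw [Nat.le_find_iff]
          intro m hm
          exact hN m i (le_trans (Finset.le_sup (Finset.mem_range.mpr hm)) hi) hm
      rw [hzi]
      simp only [hfind, hen₀]
    -- the approximating points
    set y : ℕ → Γ → AddCircle (1 : ℝ) :=
      fun i γ => (((∑' β : Γ, zi i β * Gf (β⁻¹ * γ)) : ℝ) : AddCircle (1 : ℝ)) with hy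
    have hymem : ∀ i, y i ∈ Fixn i := by
      intro i
      rw [hFixn i]
      constructor
      · intro γ
        have hcal : convT (y i) T γ = ((zi i γ : ℝ) : AddCircle (1 : ℝ)) := by
          rw [hy]
          rw [← coe_sum_convT T (fun δ => ∑' β : Γ, zi i β * Gf (β⁻¹ * δ)) γ]
          exact congrArg _ (T_conv_xi hGsum hB (hzib i) γ)
        rw [hcal]
        have hzv : zi i γ = z (e (Nat.find (hrepex i (γ : Γ ⧸ Γi i)))) := rfl
        rw [hzv, hzcast]
        exact hx _
      · intro g hg γ
        have : (∑' β : Γ, zi i β * Gf (β⁻¹ * (g⁻¹ * γ)))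
            = ∑' β : Γ, zi i β * Gf (β⁻¹ * γ) := by
          rw [← Equiv.tsum_eq (Equiv.mulLeft g⁻¹) (fun β => zi i β * Gf (β⁻¹ * (g⁻¹ * γ)))]
          refine tsum_congr fun β => ?_
          simp only [Equiv.coe_mulLeft]
          rw [hziinv i g hg β]
          congr 2
          group
        exact congrArg (fun r : ℝ => ((r : ℝ) : AddCircle (1 : ℝ))) this
    have hxrec : ∀ γ, (∑' β : Γ, z β * Gf (β⁻¹ * γ)) = xt γ := by
      intro γ
      have := conv_w_T_xi (T := T) hGsum hA hxtb γ
      simpa [hz] using this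
    have htend : Tendsto y atTop (nhds x) := by
      rw [tendsto_pi_nhds]
      intro γ
      have hXitend : Tendsto (fun i => ∑' β : Γ, zi i β * Gf (β⁻¹ * γ)) atTop
          (nhds (∑' β : Γ, z β * Gf (β⁻¹ * γ))) := by
        apply tendsto_tsum_of_dominated_convergence
          (bound := fun β : Γ => M * ‖Gf (β⁻¹ * γ)‖)
        · exact (summable_norm_shift hGsum γ).mul_left M
        · intro β
          refine Tendsto.mul_const _ ?_
          exact tendsto_const_nhds.congr' ((hzi_lim β).mono fun i h => h.symm)
        · refine Eventually.of_forall fun i β => ?_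
          rw [norm_mul, Real.norm_eq_abs]
          exact mul_le_mul_of_nonneg_right (hzib i β) (norm_nonneg _)
      have hcont : Continuous (fun r : ℝ => ((r : ℝ) : AddCircle (1 : ℝ))) :=
        AddCircle.continuous_mk' 1
      have h2' := (hcont.tendsto _).comp hXitend
      have hfin : (((∑' β : Γ, z β * Gf (β⁻¹ * γ)) : ℝ) : AddCircle (1 : ℝ)) = x γ := by
        rw [hxrec γ, hxtcoe γ]
      rw [hfin] at h2'
      simpa [hy, Function.comp_def] using h2'
    exact ⟨y, hymem, htend⟩
  refine ⟨main, ?_⟩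
  intro x hx
  obtain ⟨y, hy, hlim⟩ := main x hx
  exact mem_closure_of_tendsto hlim
    (Eventually.of_forall fun i => Set.mem_iUnion.mpr ⟨i, hy i⟩)
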